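/- Fix reals S_A>0, θ>0, λ with 0<λ<λ_th, set B=1, and fix V with v_th(λ,0) < V ≤ 1. Then any global minimizer (ζ*,S_M*) of f over [0,∞)×[0,∞) satisfies: 0 < ζ* < min{1, 2·ln(V/√(λθ))}; S_M* = (e^{−ζ*/2}/√(λθ) − 1/V)·V·S_A/(1+V·S_A); and ζ* is the unique ζ ∈ (0, min{1, 2·ln(V/√(λθ))}) satisfying (−V·S_A/(1+V·S_A))·( V − e^{ζ/2}·√(λθ)·(2−ζ)/(1−ζ) + (e^{ζ}/(1−ζ))·λθ/V ) + λ·e^{ζ}/(1−ζ) = 0. -/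

import Mathlib

/-- Posterior variance update: `ν̂(V,Λ) = V/(1+V·Λ)`. -/
noncomputable def nuhat (V Lam : ℝ) : ℝ := V / (1 + V * Lam)

/-- Decentralized myopic cost `f(ζ,S_M)` with success probability
`ρ(ζ) = ζ·e^{−ζ}` and `B` channels. -/
noncomputable def fdec (SA th lam V : ℝ) (B : ℕ) (zeta SM : ℝ) : ℝ :=
  (∑ r ∈ Finset.range (B + 1),
    (B.choose r : ℝ) * (zeta * Real.exp (-zeta)) ^ r *
      (1 - zeta * Real.exp (-zeta)) ^ (B - r) *
      nuhat V ((r : ℝ) * SA * SM / (SA + SM))) +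
  lam * zeta * (B : ℝ) * (1 + th * SM)

/-- The threshold `v_th(λ,0)`. -/
noncomputable def vth0 (SA th lam : ℝ) : ℝ :=
  Real.sqrt (lam * th) + lam / 2 +
    Real.sqrt lam * Real.sqrt (Real.sqrt (lam * th) + lam / 4 + 1 / SA)

noncomputable def Ee (V s t : ℝ) : ℝ := Real.exp (-t/2) * V - s
noncomputable def Pf (b V s lam t : ℝ) : ℝ :=
  lam - b*(Ee V s t)^2 + b*(t*((Ee V s t)*(Ee V s t + s)))
noncomputable def Ff (b V s lam t : ℝ) : ℝ := V + lam*t - b*(t*(Ee V s t)^2)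

lemma hasDerivAt_Ee (V s t : ℝ) :
    HasDerivAt (Ee V s) (-(Real.exp (-t/2)) * V / 2) t := by
  have hinner : HasDerivAt (fun x : ℝ => -x/2) (-1/2 : ℝ) t := by
    simpa using ((hasDerivAt_id t).neg.div_const 2)
  have := ((hinner.exp).mul_const V).sub_const s
  refine this.congr_deriv ?_
  ring

lemma hasDerivAt_Ff (b V s lam t : ℝ) :
    HasDerivAt (Ff b V s lam) (Pf b V s lam t) t := by
  have hE := hasDerivAt_Ee V s t
  have h1 : HasDerivAt (fun x : ℝ => V + lam*x)  lam t := by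
    simpa using ((hasDerivAt_id t).const_mul lam).const_add V
  have h2 := (((hasDerivAt_id t).mul (hE.pow 2)).const_mul b)
  have := h1.sub h2
  refine this.congr_deriv ?_
  simp only [Pf, Ee, id_eq, Pi.pow_apply, Pi.mul_apply]
  ring

lemma hasDerivAt_Pf (b V s lam t : ℝ) :
    HasDerivAt (Pf b V s lam)
      (b*(Ee V s t + s)*((Ee V s t)*(2-t) - t*s/2)) t := by
  have hE := hasDerivAt_Ee V s t
  have h1 := ((hE.pow 2).const_mul b)
  have h2 := (((hasDerivAt_id t).mul (hE.mul (hE.add_const s))).const_mul b)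
  have := ((hasDerivAt_const t lam).sub h1).add h2
  refine this.congr_deriv ?_
  simp only [Ee, id_eq, Pi.pow_apply, Pi.mul_apply]
  ring

lemma alg1 (SA V s u zeta SM : ℝ) (hSA : 0 < SA) (hV : 0 < V) (hSM : 0 ≤ SM) :
    (1 - zeta * u ^ 2) * V + zeta * u ^ 2 * (V / (1 + V * (SA * SM / (SA + SM))))
      + zeta * s ^ 2 * SM =
      V - (SA / (1 + V * SA)) * zeta * (u * V - s) ^ 2
        + zeta * (u * V * SA - s * (SA + SM * (1 + V * SA))) ^ 2 /
            ((1 + V * SA) * (SA + SM * (1 + V * SA))) := by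
  have hD : (SA + SM * (1 + V * SA)) ≠ 0 := by positivity
  have hden : (SA + SM) ≠ 0 := by positivity
  have h1 : (1 + V * SA) ≠ 0 := by positivity
  have hL : (1 + V * (SA * SM / (SA + SM))) ≠ 0 := by positivity
  field_simp
  ring

lemma identity2 (SA th lam V s zeta SM : ℝ) (hSA : 0 < SA) (hV : 0 < V)
    (hSM : 0 ≤ SM) (hs2 : s ^ 2 = lam * th) :
    fdec SA th lam V 1 zeta SM =
      V + lam * zeta - (SA / (1 + V * SA)) * zeta * (Real.exp (-zeta / 2) * V - s) ^ 2
        + zeta * (Real.exp (-zeta / 2) * V * SA - s * (SA + SM * (1 + V * SA))) ^ 2 /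
            ((1 + V * SA) * (SA + SM * (1 + V * SA))) := by
  have hexp : Real.exp (-zeta) = Real.exp (-zeta / 2) ^ 2 := by
    rw [← Real.exp_nat_mul]; ring_nf
  have h := alg1 SA V s (Real.exp (-zeta / 2)) zeta SM hSA hV hSM
  simp only [fdec, Finset.sum_range_succ, Finset.sum_range_zero, nuhat]
  rw [hexp]
  norm_num
  linear_combination h - zeta * SM * hs2

lemma alg2 (SA V s u D : ℝ) (hD : D ≠ 0) (h1 : (1:ℝ) + V * SA ≠ 0) :
    -(SA/(1+V*SA))*(u*V-s)^2 + (u*V*SA - s*D)^2/((1+V*SA)*D)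
      = (D-SA)*(s^2*D - u^2*V^2*SA)/((1+V*SA)*D) := by
  field_simp
  ring

lemma bridge (SA th lam V s t : ℝ) (hs2 : s^2 = lam*th) (hV : 0 < V)
    (hb1 : (0:ℝ) < 1 + V * SA) (ht : t ≠ 1) :
    (-V * SA / (1 + V * SA)) *
        (V - Real.exp (t / 2) * s * (2 - t) / (1 - t) +
          (Real.exp t / (1 - t)) * (lam * th / V)) +
      lam * Real.exp t / (1 - t)
    = Pf (SA/(1+V*SA)) V s lam t * (Real.exp t / (1 - t)) := by
  have hu : (0:ℝ) < Real.exp (t/2) := Real.exp_pos _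
  have h1 : Real.exp t = Real.exp (t/2) * Real.exp (t/2) := by
    rw [← Real.exp_add]; norm_num
  have h2 : Real.exp (-t/2) = (Real.exp (t/2))⁻¹ := by
    rw [← Real.exp_neg]; ring_nf
  have h1mt : (1:ℝ) - t ≠ 0 := sub_ne_zero.mpr (Ne.symm ht)
  rw [← hs2]
  simp only [Pf, Ee, h2, h1]
  field_simp
  ring

lemma SMst_facts (SA V s t : ℝ) (hSA : 0 < SA) (hV : 0 < V) (hs : 0 < s)
    (hE : 0 ≤ Ee V s t) :
    0 ≤ (Real.exp (-t/2)/s - 1/V)*V*SA/(1+V*SA) ∧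
    Real.exp (-t/2)*V*SA -
      s*(SA + ((Real.exp (-t/2)/s - 1/V)*V*SA/(1+V*SA))*(1+V*SA)) = 0 := by
  have hb1 : (0:ℝ) < 1 + V*SA := by positivity
  have h1 : (Real.exp (-t/2)/s - 1/V)*V*SA/(1+V*SA) = (Ee V s t)*SA/(s*(1+V*SA)) := by
    simp only [Ee]; field_simp
  constructor
  · rw [h1]
    exact div_nonneg (mul_nonneg hE hSA.le) (by positivity)
  · rw [h1]; simp only [Ee]; field_simp; ring

lemma Fval (SA th lam V s t : ℝ) (hSA : 0 < SA) (hV : 0 < V) (hs : 0 < s)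
    (hs2 : s^2 = lam*th) (hE : 0 ≤ Ee V s t) :
    fdec SA th lam V 1 t ((Real.exp (-t/2)/s - 1/V)*V*SA/(1+V*SA))
      = Ff (SA/(1+V*SA)) V s lam t := by
  obtain ⟨hpos, hX⟩ := SMst_facts SA V s t hSA hV hs hE
  rw [identity2 SA th lam V s t _ hSA hV hpos hs2, hX]
  simp only [Ff, Ee]
  norm_num
  ring

lemma lbV (SA th lam V s t SM : ℝ) (hSA : 0 < SA) (hV : 0 < V) (hs : 0 < s)
    (hs2 : s^2 = lam*th) (ht : 0 ≤ t) (hSM : 0 ≤ SM) (hE : Ee V s t ≤ 0) :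
    V + lam*t ≤ fdec SA th lam V 1 t SM := by
  have hb1 : (0:ℝ) < 1+V*SA := by positivity
  have hD : (0:ℝ) < SA + SM*(1+V*SA) := by positivity
  rw [identity2 SA th lam V s t SM hSA hV hSM hs2]
  have halg := alg2 SA V s (Real.exp (-t/2)) (SA+SM*(1+V*SA)) (ne_of_gt hD) (ne_of_gt hb1)
  have hEe : Real.exp (-t/2)*V ≤ s := by simp only [Ee] at hE; linarith
  have hu : 0 < Real.exp (-t/2)*V := by positivity
  have hnum : 0 ≤ (SA+SM*(1+V*SA)-SA)*(s^2*(SA+SM*(1+V*SA)) - (Real.exp (-t/2))^2*V^2*SA) := by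
    have h1 : 0 ≤ SM*(1+V*SA) := by positivity
    have hDSA : 0 ≤ SA + SM*(1+V*SA) - SA := by linarith
    have h2 : (Real.exp (-t/2))^2*V^2 ≤ s^2 := by nlinarith
    have h3 : 0 ≤ s^2*(SA+SM*(1+V*SA)) - (Real.exp (-t/2))^2*V^2*SA := by
      nlinarith [mul_le_mul_of_nonneg_right h2 hD.le,
        mul_nonneg (mul_nonneg (sq_nonneg (Real.exp (-t/2))) (sq_nonneg V)) hDSA]
    exact mul_nonneg hDSA h3
  have hkey : 0 ≤ -(SA/(1+V*SA))*(Real.exp (-t/2)*V - s)^2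
      + (Real.exp (-t/2)*V*SA - s*(SA+SM*(1+V*SA)))^2/((1+V*SA)*(SA+SM*(1+V*SA))) := by
    rw [halg]
    exact div_nonneg hnum (by positivity)
  have hre : V + lam * t - SA / (1 + V * SA) * t * (Real.exp (-t / 2) * V - s) ^ 2 +
      t * (Real.exp (-t / 2) * V * SA - s * (SA + SM * (1 + V * SA))) ^ 2 /
        ((1 + V * SA) * (SA + SM * (1 + V * SA)))
      = V + lam*t + t*(-(SA/(1+V*SA))*(Real.exp (-t/2)*V - s)^2
      + (Real.exp (-t/2)*V*SA - s*(SA+SM*(1+V*SA)))^2/((1+V*SA)*(SA+SM*(1+V*SA)))) := by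
    ring
  rw [hre]
  nlinarith [mul_nonneg ht hkey]

lemma root_deriv_pos (b V s lam : ℝ) (hb : 0 < b) (hs : 0 < s) (hlam : 0 < lam)
    {t : ℝ} (ht0 : 0 < t) (hE : 0 < Ee V s t) (hroot : Pf b V s lam t = 0) :
    0 < b*(Ee V s t + s)*((Ee V s t)*(2-t) - t*s/2) := by
  simp only [Pf] at hroot
  have h1 : b*(Ee V s t)*((1-t)*(Ee V s t) - t*s) = lam := by linear_combination -hroot
  have h2 : 0 < (1-t)*(Ee V s t) - t*s := by
    by_contra h
    push_neg at h
    nlinarith [mul_pos hb hE]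
  have h3 : 0 < Ee V s t + s := by linarith
  have h4 : 0 < (Ee V s t)*(2-t) - t*s/2 := by nlinarith [mul_pos ht0 hs]
  exact mul_pos (mul_pos hb h3) h4

lemma cross_of_deriv (F P : ℝ → ℝ) (hF : ∀ x, HasDerivAt F (P x) x) {r c : ℝ}
    (hc : 0 < c) (hP : HasDerivAt P c r) (hr : P r = 0) :
    (∀ b, r < b → ∃ v, v ∈ Set.Ioo r b ∧ F r < F v) ∧
    (∀ a, a < r → ∃ u, u ∈ Set.Ioo a r ∧ F r < F u) := by
  have hslope := hasDerivAt_iff_tendsto_slope.mp hP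
  have hev : ∀ᶠ y in nhdsWithin r {r}ᶜ, 0 < slope P r y :=
    hslope.eventually_const_lt hc
  constructor
  · intro b hb
    have hev' : ∀ᶠ y in nhdsWithin r (Set.Ioi r), 0 < slope P r y :=
      hev.filter_mono (nhdsWithin_mono r (fun y hy => ne_of_gt hy))
    rw [Filter.eventually_iff, mem_nhdsGT_iff_exists_Ioo_subset] at hev'
    obtain ⟨u', hu', hsub⟩ := hev'
    have hrw : r < min u' b := lt_min hu' hb
    have hpos : ∀ x ∈ Set.Ioo r (min u' b), 0 < P x := by
      intro x hx
      have hx' : x ∈ Set.Ioo r u' := ⟨hx.1, lt_of_lt_of_le hx.2 (min_le_left _ _)⟩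
      have hs := hsub hx'
      rw [Set.mem_setOf_eq, slope_def_field, hr, sub_zero] at hs
      have hxr : 0 < x - r := sub_pos.mpr hx.1
      have := mul_pos hs hxr
      rwa [div_mul_cancel₀ _ (ne_of_gt hxr)] at this
    have hmono : StrictMonoOn F (Set.Icc r (min u' b)) := by
      apply strictMonoOn_of_deriv_pos (convex_Icc _ _)
        (fun x _ => (hF x).continuousAt.continuousWithinAt)
      intro x hx
      rw [interior_Icc] at hx
      rw [(hF x).deriv]
      exact hpos x hx
    refine ⟨(r + min u' b)/2, ⟨by linarith, ?_⟩, ?_⟩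
    · have : (r + min u' b)/2 < min u' b := by linarith
      exact lt_of_lt_of_le this (min_le_right _ _)
    · exact hmono (Set.left_mem_Icc.mpr hrw.le) ⟨by linarith, by linarith⟩ (by linarith)
  · intro a ha
    have hev' : ∀ᶠ y in nhdsWithin r (Set.Iio r), 0 < slope P r y :=
      hev.filter_mono (nhdsWithin_mono r (fun y hy => ne_of_lt hy))
    rw [Filter.eventually_iff, mem_nhdsLT_iff_exists_Ioo_subset] at hev'
    obtain ⟨l, hl, hsub⟩ := hev'
    have hrw : max l a < r := max_lt hl ha
    have hneg : ∀ x ∈ Set.Ioo (max l a) r, P x < 0 := by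
      intro x hx
      have hx' : x ∈ Set.Ioo l r := ⟨lt_of_le_of_lt (le_max_left _ _) hx.1, hx.2⟩
      have hs := hsub hx'
      rw [Set.mem_setOf_eq, slope_def_field, hr, sub_zero] at hs
      have hxr : x - r < 0 := sub_neg.mpr hx.2
      have := mul_neg_of_pos_of_neg hs hxr
      rwa [div_mul_cancel₀ _ (ne_of_lt hxr)] at this
    have hanti : StrictAntiOn F (Set.Icc (max l a) r) := by
      apply strictAntiOn_of_deriv_neg (convex_Icc _ _)
        (fun x _ => (hF x).continuousAt.continuousWithinAt)
      intro x hx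
      rw [interior_Icc] at hx
      rw [(hF x).deriv]
      exact hneg x hx
    refine ⟨(max l a + r)/2, ⟨?_, by linarith⟩, ?_⟩
    · have : a ≤ max l a := le_max_right _ _
      linarith
    · exact hanti ⟨by linarith, by linarith⟩ (Set.right_mem_Icc.mpr hrw.le) (by linarith)

lemma two_roots_false (F P : ℝ → ℝ) (hF : ∀ x, HasDerivAt F (P x) x)
    {a b r1 r2 : ℝ}
    (hroot : ∀ r ∈ Set.Ioo a b, P r = 0 → ∃ c, 0 < c ∧ HasDerivAt P c r)
    (h1 : r1 ∈ Set.Ioo a b) (h2 : r2 ∈ Set.Ioo a b)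
    (hP1 : P r1 = 0) (hP2 : P r2 = 0) (h12 : r1 < r2) : False := by
  obtain ⟨x, hx, hmax⟩ := isCompact_Icc.exists_isMaxOn
    (Set.nonempty_Icc.mpr h12.le)
    (fun y _ => (hF y).continuousAt.continuousWithinAt)
  rw [Set.mem_Icc] at hx
  rcases eq_or_lt_of_le hx.1 with hxr1 | hxr1
  · obtain ⟨c, hc, hPd⟩ := hroot r1 h1 hP1
    obtain ⟨v, hv, hFv⟩ := (cross_of_deriv F P hF hc hPd hP1).1 r2 h12
    have := hmax (Set.mem_Icc.mpr ⟨hv.1.le, hv.2.le⟩)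
    rw [← hxr1] at this
    exact absurd this (not_le.mpr hFv)
  · rcases eq_or_lt_of_le hx.2 with hxr2 | hxr2
    · obtain ⟨c, hc, hPd⟩ := hroot r2 h2 hP2
      obtain ⟨u, hu, hFu⟩ := (cross_of_deriv F P hF hc hPd hP2).2 r1 h12
      have := hmax (Set.mem_Icc.mpr ⟨hu.1.le, hu.2.le⟩)
      rw [hxr2] at this
      exact absurd this (not_le.mpr hFu)
    · have hloc : IsLocalMax F x := hmax.isLocalMax (Icc_mem_nhds hxr1 hxr2)
      have hPx : P x = 0 := hloc.hasDerivAt_eq_zero (hF x)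
      have hxI : x ∈ Set.Ioo a b := ⟨lt_trans h1.1 hxr1, lt_trans hxr2 h2.2⟩
      obtain ⟨c, hc, hPd⟩ := hroot x hxI hPx
      obtain ⟨v, hv, hFv⟩ := (cross_of_deriv F P hF hc hPd hPx).1 r2 hxr2
      have := hmax (Set.mem_Icc.mpr ⟨le_trans hx.1 hv.1.le, hv.2.le⟩)
      exact absurd this (not_le.mpr hFv)

lemma at_most_one_root (F P : ℝ → ℝ) (hF : ∀ x, HasDerivAt F (P x) x)
    {a b r1 r2 : ℝ}
    (hroot : ∀ r ∈ Set.Ioo a b, P r = 0 → ∃ c, 0 < c ∧ HasDerivAt P c r)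
    (h1 : r1 ∈ Set.Ioo a b) (h2 : r2 ∈ Set.Ioo a b)
    (hP1 : P r1 = 0) (hP2 : P r2 = 0) : r1 = r2 := by
  rcases lt_trichotomy r1 r2 with h | h | h
  · exact absurd (two_roots_false F P hF hroot h1 h2 hP1 hP2 h) not_false
  · exact h
  · exact absurd (two_roots_false F P hF hroot h2 h1 hP2 hP1 h) not_false

set_option maxHeartbeats 1000000 in
/-- for `B = 1` and `v_th(λ,0) < V ≤ 1`, any global minimizer
`(ζ*,S_M*)` of the decentralized myopic cost over `[0,∞)²` satisfies
`0 < ζ* < min{1, 2·ln(V/√(λθ))}`, the closed-form for `S_M*`, and `ζ*` is the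
unique root of the stated equation in `(0, min{1, 2·ln(V/√(λθ))})`. -/
theorem stmt_13 (SA th lam V : ℝ) (hSA : 0 < SA) (hth : 0 < th) (hlam : 0 < lam)
    (hlt : lam < 1 / (Real.sqrt (1 + 1 / SA) + Real.sqrt th) ^ 2)
    (hVl : vth0 SA th lam < V) (hV1 : V ≤ 1)
    (zs SMs : ℝ) (hzs : 0 ≤ zs) (hSMs : 0 ≤ SMs)
    (hmin : ∀ zeta SM : ℝ, 0 ≤ zeta → 0 ≤ SM →
      fdec SA th lam V 1 zs SMs ≤ fdec SA th lam V 1 zeta SM) :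
    0 < zs ∧ zs < min 1 (2 * Real.log (V / Real.sqrt (lam * th))) ∧
      SMs = (Real.exp (-zs / 2) / Real.sqrt (lam * th) - 1 / V) * V * SA / (1 + V * SA) ∧
      ((-V * SA / (1 + V * SA)) *
          (V - Real.exp (zs / 2) * Real.sqrt (lam * th) * (2 - zs) / (1 - zs) +
            (Real.exp zs / (1 - zs)) * (lam * th / V)) +
        lam * Real.exp zs / (1 - zs) = 0) ∧
      (∀ zeta ∈ Set.Ioo 0 (min 1 (2 * Real.log (V / Real.sqrt (lam * th)))),
        ((-V * SA / (1 + V * SA)) *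
            (V - Real.exp (zeta / 2) * Real.sqrt (lam * th) * (2 - zeta) / (1 - zeta) +
              (Real.exp zeta / (1 - zeta)) * (lam * th / V)) +
          lam * Real.exp zeta / (1 - zeta) = 0) → zeta = zs) := by
  have hvth : 0 < vth0 SA th lam := by
    unfold vth0
    positivity
  have hV : 0 < V := hvth.trans hVl
  obtain ⟨s, hs_def⟩ : ∃ x : ℝ, x = Real.sqrt (lam * th) := ⟨_, rfl⟩
  rw [← hs_def]
  have hlt2 : (0:ℝ) < lam * th := mul_pos hlam hth
  have hs0 : 0 < s := by rw [hs_def]; exact Real.sqrt_pos.mpr hlt2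
  have hs2 : s^2 = lam*th := by rw [hs_def]; exact Real.sq_sqrt hlt2.le
  have hb1 : (0:ℝ) < 1 + V*SA := by positivity
  have hVs : s < V := by
    have h : s ≤ vth0 SA th lam := by
      unfold vth0
      rw [← hs_def]
      nlinarith [Real.sqrt_nonneg lam, Real.sqrt_nonneg (s + lam/4 + 1/SA),
        mul_nonneg (Real.sqrt_nonneg lam) (Real.sqrt_nonneg (s + lam/4 + 1/SA))]
    exact lt_of_le_of_lt h hVl
  have hEiff : ∀ t : ℝ, 0 < Ee V s t ↔ t < 2 * Real.log (V / s) := by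
    intro t
    have h1 : Real.exp (-t/2) * V = Real.exp (-t/2 + Real.log V) := by
      rw [Real.exp_add, Real.exp_log hV]
    have hlog : Real.log (V/s) = Real.log V - Real.log s :=
      Real.log_div (ne_of_gt hV) (ne_of_gt hs0)
    rw [show Ee V s t = Real.exp (-t/2)*V - s from rfl, sub_pos, h1,
      ← Real.log_lt_iff_lt_exp hs0, hlog]
    constructor <;> intro <;> linarith
  -- strict slope at 0
  have hq2 : Real.sqrt (s + lam/4 + 1/SA)^2 = s + lam/4 + 1/SA :=
    Real.sq_sqrt (by positivity)
  have hr2 : Real.sqrt lam^2 = lam := Real.sq_sqrt hlam.le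
  have hVl' : s + lam/2 + Real.sqrt lam * Real.sqrt (s + lam/4 + 1/SA) < V := by
    have h := hVl
    unfold vth0 at h
    rw [← hs_def] at h
    exact h
  have hrq : 0 ≤ Real.sqrt lam * Real.sqrt (s + lam/4 + 1/SA) :=
    mul_nonneg (Real.sqrt_nonneg _) (Real.sqrt_nonneg _)
  have hsq : (Real.sqrt lam * Real.sqrt (s + lam/4 + 1/SA))^2 < (V - s - lam/2)^2 := by
    apply pow_lt_pow_left₀ (by linarith) hrq (by norm_num)
  have h5 : (Real.sqrt lam * Real.sqrt (s + lam/4 + 1/SA))^2 = lam*(s + lam/4 + 1/SA) := by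
    rw [mul_pow, hr2, hq2]
  have hkey : lam*V + lam/SA < (V - s)^2 := by
    have h6 : lam*(s + lam/4 + 1/SA) < (V - s - lam/2)^2 := h5 ▸ hsq
    have h7 : lam*s + lam^2/4 + lam/SA < (V - s - lam/2)^2 := by
      have he : lam * (s + lam / 4 + 1 / SA) = lam*s + lam^2/4 + lam/SA := by ring
      linarith [he ▸ h6]
    nlinarith [h7]
  have hg0 : lam < SA/(1+V*SA)*(V-s)^2 := by
    rw [div_mul_eq_mul_div, lt_div_iff₀ hb1]
    have hSAlam : SA*(lam*V + lam/SA) = lam*V*SA + lam := by field_simp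
    have hmul := mul_lt_mul_of_pos_left hkey hSA
    rw [hSAlam] at hmul
    linarith only [hmul]
  -- witness point
  have hcontE : Continuous (Ee V s) := by unfold Ee; fun_prop
  have hcontg : Continuous (fun t => lam - SA/(1+V*SA)*(Ee V s t)^2) := by fun_prop
  have hE0 : Ee V s 0 = V - s := by simp [Ee]
  have hval : lam - SA/(1+V*SA)*(Ee V s 0)^2 < 0 := by rw [hE0]; linarith
  have h1ev : ∀ᶠ t in nhds (0:ℝ), lam - SA/(1+V*SA)*(Ee V s t)^2 < 0 :=
    Filter.Tendsto.eventually_lt_const hval hcontg.continuousAt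
  have hval2 : (0:ℝ) < Ee V s 0 := by rw [hE0]; linarith
  have h2ev : ∀ᶠ t in nhds (0:ℝ), 0 < Ee V s t :=
    Filter.Tendsto.eventually_const_lt hval2 hcontE.continuousAt
  have h3 := (((h1ev.and h2ev).filter_mono nhdsWithin_le_nhds).and
    (eventually_mem_nhdsWithin (s := Set.Ioi (0:ℝ)))).exists
  obtain ⟨z0, ⟨hgz0, hEz0⟩, hz0mem⟩ := h3
  have hz0pos : 0 < z0 := hz0mem
  have hSM0 := SMst_facts SA V s z0 hSA hV hs0 hEz0.le
  have hfd0 : fdec SA th lam V 1 z0 ((Real.exp (-z0/2)/s - 1/V)*V*SA/(1+V*SA))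
      = Ff (SA/(1+V*SA)) V s lam z0 :=
    Fval SA th lam V s z0 hSA hV hs0 hs2 hEz0.le
  have hFz0 : Ff (SA/(1+V*SA)) V s lam z0 < V := by
    have hmm := mul_neg_of_pos_of_neg hz0pos hgz0
    have he : Ff (SA/(1+V*SA)) V s lam z0
        = V + z0*(lam - SA/(1+V*SA)*(Ee V s z0)^2) := by
      simp only [Ff]; ring
    rw [he]; linarith
  have hfmin_ltV : fdec SA th lam V 1 zs SMs < V := by
    have h := hmin z0 _ (le_of_lt hz0pos) hSM0.1
    rw [hfd0] at h
    exact lt_of_le_of_lt h hFz0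
  -- zs > 0
  have hzs_pos : 0 < zs := by
    rcases eq_or_lt_of_le hzs with h | h
    · exfalso
      have h0 : fdec SA th lam V 1 zs SMs = V := by
        rw [identity2 SA th lam V s zs SMs hSA hV hSMs hs2, ← h]
        norm_num
      rw [h0] at hfmin_ltV
      exact lt_irrefl V hfmin_ltV
    · exact h
  -- zs < 2 log (V/s)
  have hzs2L : zs < 2 * Real.log (V/s) := by
    by_contra hcon
    push_neg at hcon
    have hEle : Ee V s zs ≤ 0 := by
      by_contra hE
      push_neg at hE
      exact absurd ((hEiff zs).mp hE) (not_lt.mpr hcon)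
    have hlb := lbV SA th lam V s zs SMs hSA hV hs0 hs2 hzs hSMs hEle
    linarith only [hlb, hfmin_ltV, mul_pos hlam hzs_pos]
  have hEzs : 0 < Ee V s zs := (hEiff zs).mpr hzs2L
  -- SMs closed form
  have hSMst := SMst_facts SA V s zs hSA hV hs0 hEzs.le
  have hle := hmin zs _ hzs hSMst.1
  rw [Fval SA th lam V s zs hSA hV hs0 hs2 hEzs.le] at hle
  rw [identity2 SA th lam V s zs SMs hSA hV hSMs hs2] at hle
  have hFex : Ff (SA/(1+V*SA)) V s lam zs
      = V + lam*zs - SA/(1+V*SA)*zs*(Real.exp (-zs/2)*V - s)^2 := by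
    simp only [Ff, Ee]; ring
  rw [hFex] at hle
  have hQ : (0:ℝ) < (1+V*SA)*(SA+SMs*(1+V*SA)) := by positivity
  have hXz : Real.exp (-zs/2)*V*SA - s*(SA+SMs*(1+V*SA)) = 0 := by
    by_contra hne
    have hx2 : 0 < (Real.exp (-zs/2)*V*SA - s*(SA+SMs*(1+V*SA)))^2 := by
      rw [pow_two]; exact mul_self_pos.mpr hne
    have hpos : 0 < zs*(Real.exp (-zs/2)*V*SA - s*(SA+SMs*(1+V*SA)))^2 /
        ((1+V*SA)*(SA+SMs*(1+V*SA))) := div_pos (mul_pos hzs_pos hx2) hQ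
    linarith only [hpos, hle]
  have hSMs_eq : SMs = (Real.exp (-zs/2)/s - 1/V)*V*SA/(1+V*SA) := by
    have hs1 : s*(1+V*SA) ≠ 0 := by positivity
    have h2 : SMs*(s*(1+V*SA)) = (Real.exp (-zs/2)*V - s)*SA := by
      linear_combination -hXz
    have h3 : SMs = (Real.exp (-zs/2)*V - s)*SA/(s*(1+V*SA)) := by
      rw [eq_div_iff hs1]; exact h2
    rw [h3]; field_simp
  have hfF : fdec SA th lam V 1 zs SMs = Ff (SA/(1+V*SA)) V s lam zs := by
    rw [hSMs_eq]
    exact Fval SA th lam V s zs hSA hV hs0 hs2 hEzs.le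
  -- local min ⇒ first order condition
  have hmem : Set.Ioo (0:ℝ) (2*Real.log (V/s)) ∈ nhds zs :=
    isOpen_Ioo.mem_nhds ⟨hzs_pos, hzs2L⟩
  have hlocal : IsLocalMin (Ff (SA/(1+V*SA)) V s lam) zs := by
    apply Filter.eventually_of_mem hmem
    intro t ht
    have hEt : 0 < Ee V s t := (hEiff t).mpr ht.2
    have h0 := hmin t _ (le_of_lt ht.1) (SMst_facts SA V s t hSA hV hs0 hEt.le).1
    rw [Fval SA th lam V s t hSA hV hs0 hs2 hEt.le] at h0
    rw [← hfF]
    exact h0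
  have hPzs : Pf (SA/(1+V*SA)) V s lam zs = 0 :=
    hlocal.hasDerivAt_eq_zero (hasDerivAt_Ff _ V s lam zs)
  -- zs < 1
  have hzs1 : zs < 1 := by
    by_contra hcon
    push_neg at hcon
    have hbpos : (0:ℝ) < SA/(1+V*SA) := by positivity
    have hPzs' := hPzs
    simp only [Pf] at hPzs'
    have h1 : SA/(1+V*SA)*(Ee V s zs)*((1-zs)*(Ee V s zs) - zs*s) = lam := by
      linear_combination -hPzs'
    have hneg : (1-zs)*(Ee V s zs) - zs*s < 0 := by
      have ha := mul_pos hzs_pos hs0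
      have hbb := mul_nonneg (by linarith only [hcon] : (0:ℝ) ≤ zs - 1) hEzs.le
      linarith only [ha, hbb]
    have hfin := mul_neg_of_pos_of_neg (mul_pos hbpos hEzs) hneg
    linarith only [hfin, h1, hlam]
  have hzs_min : zs < min 1 (2*Real.log (V/s)) := lt_min hzs1 hzs2L
  refine ⟨hzs_pos, hzs_min, hSMs_eq, ?_, ?_⟩
  · rw [bridge SA th lam V s zs hs2 hV hb1 (ne_of_lt hzs1), hPzs, zero_mul]
  · intro zeta hzeta hG
    have hz1 : zeta < 1 := lt_of_lt_of_le hzeta.2 (min_le_left _ _)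
    rw [bridge SA th lam V s zeta hs2 hV hb1 (ne_of_lt hz1)] at hG
    have hq : Real.exp zeta/(1-zeta) ≠ 0 :=
      div_ne_zero (Real.exp_ne_zero _) (ne_of_gt (by linarith))
    have hPz : Pf (SA/(1+V*SA)) V s lam zeta = 0 := by
      rcases mul_eq_zero.mp hG with h | h
      · exact h
      · exact absurd h hq
    refine at_most_one_root (Ff (SA/(1+V*SA)) V s lam) (Pf (SA/(1+V*SA)) V s lam)
      (fun x => hasDerivAt_Ff _ V s lam x) ?_ hzeta ⟨hzs_pos, hzs_min⟩ hPz hPzs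
    intro r hr hPr
    have hEr : 0 < Ee V s r := (hEiff r).mpr (lt_of_lt_of_le hr.2 (min_le_right _ _))
    exact ⟨_, root_deriv_pos (SA/(1+V*SA)) V s lam (by positivity) hs0 hlam hr.1 hEr hPr,
      hasDerivAt_Pf _ V s lam r⟩
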